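/- There exists a 3×3 matrix A and a nonzero nonnegative 3×3 matrix Δ such that d(A, Δ) = ∞. Specifically, for A with rows (1,1,1), (1,1,2), (1,2,3) and Δ the matrix with a single 1 in position (3,3) and zeros elsewhere, every matrix M with |M − A| ≤ δΔ has determinant −1 and is therefore nonsingular for every δ ≥ 0. -/
import Mathlib


open Matrix
open scoped ENNReal NNReal

noncomputable def regRad {n : ℕ} (A Δ : Matrix (Fin n) (Fin n) ℝ) : ℝ≥0∞ :=
  ⨅ δ ∈ {δ : ℝ≥0 | ∃ M : Matrix (Fin n) (Fin n) ℝ,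
      (∀ i j, |M i j - A i j| ≤ (δ : ℝ) * Δ i j) ∧ M.det = 0},
    (δ : ℝ≥0∞)

lemma det_eq_neg_one (δ : ℝ) (M : Matrix (Fin 3) (Fin 3) ℝ)
    (h : ∀ i j, |M i j - (!![1, 1, 1; 1, 1, 2; 1, 2, 3] : Matrix (Fin 3) (Fin 3) ℝ) i j|
        ≤ δ * (!![0, 0, 0; 0, 0, 0; 0, 0, 1] : Matrix (Fin 3) (Fin 3) ℝ) i j) :
    M.det = -1 := by
  have e : ∀ i j : Fin 3, ¬ (i = 2 ∧ j = 2) →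
      M i j = (!![1, 1, 1; 1, 1, 2; 1, 2, 3] : Matrix (Fin 3) (Fin 3) ℝ) i j := by
    intro i j hij
    have hz : (!![0, 0, 0; 0, 0, 0; 0, 0, 1] : Matrix (Fin 3) (Fin 3) ℝ) i j = 0 := by
      fin_cases i <;> fin_cases j <;> simp_all [Matrix.vecHead, Matrix.vecTail]
    have := h i j
    rw [hz, mul_zero, abs_nonpos_iff, sub_eq_zero] at this
    exact this
  have e00 := e 0 0 (by simp); have e01 := e 0 1 (by simp); have e02 := e 0 2 (by simp)
  have e10 := e 1 0 (by simp); have e11 := e 1 1 (by simp); have e12 := e 1 2 (by simp)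
  have e20 := e 2 0 (by simp); have e21 := e 2 1 (by simp)
  rw [Matrix.det_fin_three, e00, e01, e02, e10, e11, e12, e20, e21]
  norm_num [Matrix.cons_val', Matrix.cons_val_zero, Matrix.cons_val_one, Matrix.head_cons,
    Matrix.empty_val', Matrix.cons_val_fin_one, Matrix.cons_val_two, Matrix.tail_cons, Matrix.vecHead, Matrix.vecTail]

theorem regRad_infinite_example :
    (∀ δ : ℝ, 0 ≤ δ → ∀ M : Matrix (Fin 3) (Fin 3) ℝ,
      (∀ i j, |M i j - (!![1, 1, 1; 1, 1, 2; 1, 2, 3] : Matrix (Fin 3) (Fin 3) ℝ) i j|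
        ≤ δ * (!![0, 0, 0; 0, 0, 0; 0, 0, 1] : Matrix (Fin 3) (Fin 3) ℝ) i j) →
      M.det = -1) ∧
    regRad (!![1, 1, 1; 1, 1, 2; 1, 2, 3] : Matrix (Fin 3) (Fin 3) ℝ)
      !![0, 0, 0; 0, 0, 0; 0, 0, 1] = ⊤ := by
  constructor
  · intro δ _ M h
    exact det_eq_neg_one δ M h
  · have : {δ : ℝ≥0 | ∃ M : Matrix (Fin 3) (Fin 3) ℝ,
        (∀ i j, |M i j - (!![1, 1, 1; 1, 1, 2; 1, 2, 3] : Matrix (Fin 3) (Fin 3) ℝ) i j|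
          ≤ (δ : ℝ) * (!![0, 0, 0; 0, 0, 0; 0, 0, 1] : Matrix (Fin 3) (Fin 3) ℝ) i j)
        ∧ M.det = 0} = ∅ := by
      ext δ
      simp only [Set.mem_setOf_eq, Set.mem_empty_iff_false, iff_false, not_exists]
      rintro M ⟨h1, h2⟩
      have := det_eq_neg_one (δ : ℝ) M h1
      rw [h2] at this
      norm_num at this
    rw [regRad, this]
    simp
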